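/- For every i ≥ 1 one has the operator identities B_i∘D_i = B_i∘T_i = B_i∘∂_i on Poly; consequently, for every f ∈ Poly⁺ the finitely supported sums satisfy Σ_{i≥1} B_i(∂_i f) = f and Σ_{i≥1} B_i(T_i f) = f, i.e. the slide creators B_i are simultaneously creation operators for the divided differences ∂_i and for the quasisymmetric divided differences T_i. -/

import Mathlib

/-
Conventions: `Pol = MvPolynomial ℕ ℤ` with the Lean variable `X i` representing
the paper's variable `x_{i+1}` (0-indexed).  All operators carrying a paper index
`i ≥ 1` are represented by Lean operators indexed by `i : ℕ` (Lean `i` ↔ paper `i+1`),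
and sequences of positive integers are represented by sequences of natural numbers
(entry `v` ↔ paper entry `v+1`).
-/

open MvPolynomial
open scoped Classical

abbrev Pol := MvPolynomial ℕ ℤ

noncomputable section

/-- Interchange the variables `x_{i+1}` and `x_{i+2}` (paper indexing). -/
def swapVar (i : ℕ) (f : Pol) : Pol := rename (Equiv.swap i (i+1)) f

/-- Exact division: the unique `g` with `d * g = f` when it exists (`0` otherwise). -/
def exactDiv (d f : Pol) : Pol := if h : ∃ g : Pol, d * g = f then h.choose else 0

/-- The divided difference operator `∂_{i+1}` (paper indexing). -/
def ddiff (i : ℕ) (f : Pol) : Pol := exactDiv (X i - X (i+1)) (f - swapVar i f)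

/-- The Bergeron–Sottile operator `R_{i+1}` (paper indexing): `x_j ↦ x_j` for
`j < i+1`, `x_{i+1} ↦ 0`, `x_j ↦ x_{j-1}` for `j > i+1`. -/
def BS (i : ℕ) : Pol →ₐ[ℤ] Pol :=
  aeval fun j => if j < i then X j else if j = i then 0 else X (j-1)

/-- `m`-fold iterate of `BS i`. -/
def BSit (i m : ℕ) (f : Pol) : Pol := (fun g => BS i g)^[m] f

/-- `Z g = Σ_{k ≥ 0} R₁ᵏ g`. -/
def Zop (f : Pol) : Pol := ∑ᶠ k : ℕ, BSit 0 k f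

/-- `Z^{(m)} g = Σ_{k ≥ 0} R₁^{km} g`. -/
def Zm (m : ℕ) (f : Pol) : Pol := ∑ᶠ k : ℕ, BSit 0 (k * m) f

/-- The truncation operator keeping the first `n` variables: `Π_n` in paper indexing. -/
def truncOp (n : ℕ) : Pol →ₐ[ℤ] Pol := aeval fun j => if j < n then X j else 0

/-- The quasisymmetric divided difference `T_{i+1}` defined as the exact quotient
`((R_{i+2} - R_{i+1})f)/x_{i+1}` (paper indexing). -/
def TqDiv (i : ℕ) (f : Pol) : Pol := exactDiv (X i) (BS (i+1) f - BS i f)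

/-- The quasisymmetric divided difference `T_{i+1} = R_{i+1} ∘ ∂_{i+1}` (paper indexing). -/
def Tq (i : ℕ) (f : Pol) : Pol := BS i (ddiff i f)

/-- The `m`-quasisymmetric divided difference `T^{(m)}_{i+1}` (paper indexing). -/
def Tm (m i : ℕ) (f : Pol) : Pol := exactDiv (X i) (BSit (i+1) m f - BSit i m f)

/-- The slide extractor `D_{i+1} = Π_{i+1} ∘ ∂_{i+1}` (paper indexing). -/
def Dop (i : ℕ) (f : Pol) : Pol := truncOp (i+1) (ddiff i f)

/-- The `m`-slide extractor `D^{(m)}_{i+1} = Π_{i+1} ∘ T^{(m)}_{i+1}` (paper indexing). -/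
def Dm (m i : ℕ) (f : Pol) : Pol := truncOp (i+1) (Tm m i f)

/-- The slide creator `B_{i+1} f = Σ_{k=1}^{i+1} x_k · R_k^{i+1-k}(Π_{i+1} f)` (paper indexing). -/
def Bop (i : ℕ) (f : Pol) : Pol :=
  ∑ k ∈ Finset.range (i+1), X k * BSit k (i - k) (truncOp (i+1) f)

/-- The creation operator `Z ∘ x_{i+1} ∘ R_{i+1}` (paper indexing). -/
def crea (i : ℕ) (f : Pol) : Pol := Zop (X i * BS i f)

/-- A permutation of `{0,1,2,…}` is finitely supported if it fixes all but
finitely many points. -/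
def FinSupp (w : Equiv.Perm ℕ) : Prop := Set.Finite {x | w x ≠ x}

/-- Coxeter length: the minimal `k` such that `w` is a product of `k` simple
transpositions. -/
def len (w : Equiv.Perm ℕ) : ℕ :=
  sInf {k | ∃ l : List ℕ, l.length = k ∧ (l.map fun i => Equiv.swap i (i+1)).prod = w}

/-- The set of reduced words for `w`. -/
def Red (w : Equiv.Perm ℕ) : Set (List ℕ) :=
  {l | l.length = len w ∧ (l.map fun i => Equiv.swap i (i+1)).prod = w}

/-- A family of polynomials indexed by permutations is a family of Schubert
polynomials if: each member is homogeneous of degree the length, the identity is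
sent to `1`, and divided differences act as expected (all this for finitely
supported permutations). -/
def IsSchubertFamily (S : Equiv.Perm ℕ → Pol) : Prop :=
  (∀ w, FinSupp w → (S w).IsHomogeneous (len w)) ∧
  S 1 = 1 ∧
  ∀ w, FinSupp w → ∀ i : ℕ,
    ddiff i (S w) = if w (i+1) < w i then S (w * Equiv.swap i (i+1)) else 0

/-- `b` is a compatible sequence for `a`. -/
def Compat {k : ℕ} (a b : Fin k → ℕ) : Prop :=
  Monotone b ∧ (∀ j, b j ≤ a j) ∧
  ∀ (j : ℕ) (h : j + 1 < k),
    a ⟨j, Nat.lt_of_succ_lt h⟩ < a ⟨j+1, h⟩ → b ⟨j, Nat.lt_of_succ_lt h⟩ < b ⟨j+1, h⟩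

/-- The slide polynomial `𝔉_a`, as the sum of the monomials of all compatible
sequences for `a`. -/
def slide {k : ℕ} (a : Fin k → ℕ) : Pol :=
  ∑ᶠ b ∈ {b : Fin k → ℕ | Compat a b}, ∏ j, X (b j)

/-- `b` is an `m`-compatible sequence for `a` (entrywise congruent mod `m`). -/
def MCompat (m : ℕ) {k : ℕ} (a b : Fin k → ℕ) : Prop :=
  Monotone b ∧ (∀ j, b j ≤ a j ∧ b j % m = a j % m) ∧
  ∀ (j : ℕ) (h : j + 1 < k),
    a ⟨j, Nat.lt_of_succ_lt h⟩ < a ⟨j+1, h⟩ → b ⟨j, Nat.lt_of_succ_lt h⟩ < b ⟨j+1, h⟩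

/-- The `m`-slide polynomial `𝔉ᵐ_a`. -/
def mslide (m : ℕ) {k : ℕ} (a : Fin k → ℕ) : Pol :=
  ∑ᶠ b ∈ {b : Fin k → ℕ | MCompat m a b}, ∏ j, X (b j)

/-- Value of the `m`-slide creator `B^{(m)}_{a+1}` (paper indexing) on the monomial with
exponent vector `d`. -/
def BmMono (m a : ℕ) (d : ℕ →₀ ℕ) : Pol :=
  if ∃ t, a < t ∧ d t ≠ 0 then 0
  else monomial (d.erase a) 1 *
    ∑ r ∈ Finset.range (a+1),
      if r * m ≤ a ∧ ∀ t, t < a → d t ≠ 0 → t < a - r * m then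
        X (a - r * m) ^ (d a + 1) else 0

/-- The `m`-slide creator `B^{(m)}_{a+1}` (paper indexing), extended linearly from
its values on monomials. -/
def Bm (m a : ℕ) (f : Pol) : Pol := ∑ d ∈ f.support, C (f.coeff d) * BmMono m a d

end

noncomputable section

lemma X_sub_ne (i : ℕ) : (X i - X (i+1) : Pol) ≠ 0 := by
  intro h
  have h2 : (X i : Pol) = X (i+1) := by linear_combination h
  have := congrArg (eval fun j => if j = i then (1:ℤ) else 0) h2
  simp at this

lemma exactDiv_spec {d f : Pol} (h : ∃ g : Pol, d * g = f) : d * exactDiv d f = f := by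
  rw [exactDiv, dif_pos h]; exact h.choose_spec

lemma exactDiv_eq {d f g : Pol} (hd : d ≠ 0) (h : d * g = f) : exactDiv d f = g :=
  mul_left_cancel₀ hd (by rw [exactDiv_spec ⟨g, h⟩, h])

lemma swapVar_X (i j : ℕ) : swapVar i (X j) = X (Equiv.swap i (i+1) j) := by
  simp [swapVar]

lemma dvd_sub_swap (i : ℕ) (f : Pol) : (X i - X (i+1) : Pol) ∣ (f - swapVar i f) := by
  induction f using MvPolynomial.induction_on with
  | C a => simp [swapVar]
  | add p q hp hq =>
      have : (p + q) - swapVar i (p + q) = (p - swapVar i p) + (q - swapVar i q) := by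
        simp [swapVar]; ring
      rw [this]; exact dvd_add hp hq
  | mul_X p n hp =>
      have hs : swapVar i (p * X n) = swapVar i p * swapVar i (X n) := by
        simp [swapVar]
      have key : p * X n - swapVar i (p * X n)
          = (p - swapVar i p) * X n + swapVar i p * (X n - swapVar i (X n)) := by
        rw [hs]; ring
      rw [key]
      refine dvd_add (Dvd.dvd.mul_right hp _) (Dvd.dvd.mul_left ?_ _)
      rw [swapVar_X]
      rcases eq_or_ne n i with rfl | h1
      · simp
      rcases eq_or_ne n (i+1) with rfl | h2
      · rw [Equiv.swap_apply_right]
        exact ⟨-1, by ring⟩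
      · rw [Equiv.swap_apply_of_ne_of_ne h1 h2]; simp

lemma ddiff_spec (i : ℕ) (f : Pol) :
    (X i - X (i+1) : Pol) * ddiff i f = f - swapVar i f := by
  obtain ⟨c, hc⟩ := dvd_sub_swap i f
  exact exactDiv_spec ⟨c, hc.symm⟩

lemma ddiff_eq {i : ℕ} {f g : Pol} (h : (X i - X (i+1) : Pol) * g = f - swapVar i f) :
    ddiff i f = g := exactDiv_eq (X_sub_ne i) h

lemma swapVar_swapVar (i : ℕ) (f : Pol) : swapVar i (swapVar i f) = f := by
  rw [swapVar, swapVar, rename_rename]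
  have : (Equiv.swap i (i+1) : ℕ → ℕ) ∘ (Equiv.swap i (i+1)) = id := by
    funext x; simp
  rw [this, rename_id]; rfl

lemma swapVar_ddiff (i : ℕ) (f : Pol) : swapVar i (ddiff i f) = ddiff i f := by
  have h := congrArg (swapVar i) (ddiff_spec i f)
  have hmul : ∀ p q : Pol, swapVar i (p * q) = swapVar i p * swapVar i q := by
    intro p q; simp [swapVar]
  have hsub : ∀ p q : Pol, swapVar i (p - q) = swapVar i p - swapVar i q := by
    intro p q; simp [swapVar]
  rw [hsub, hmul, hsub, swapVar_swapVar] at h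
  rw [swapVar_X, swapVar_X, Equiv.swap_apply_left, Equiv.swap_apply_right] at h
  have h2 : (X i - X (i+1) : Pol) * swapVar i (ddiff i f) = f - swapVar i f := by
    linear_combination -h
  rw [← ddiff_eq h2]

end

noncomputable section

lemma truncOp_X (n j : ℕ) : truncOp n (X j) = if j < n then X j else 0 := by
  simp [truncOp]

lemma BS_X (i j : ℕ) : BS i (X j) = if j < i then X j else if j = i then 0 else X (j-1) := by
  simp [BS]

lemma trunc_trunc (n : ℕ) (f : Pol) : truncOp n (truncOp n f) = truncOp n f := by
  have : (truncOp n).comp (truncOp n) = truncOp n := by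
    apply MvPolynomial.algHom_ext
    intro j
    simp only [AlgHom.comp_apply, truncOp_X]
    split <;> simp [truncOp_X, *]
  calc truncOp n (truncOp n f) = ((truncOp n).comp (truncOp n)) f := rfl
    _ = truncOp n f := by rw [this]

lemma trunc_BS (i : ℕ) (f : Pol) :
    truncOp (i+1) (BS i f) = truncOp (i+1) (swapVar i f) := by
  have : (truncOp (i+1)).comp (BS i) =
      ((truncOp (i+1)).comp (rename (Equiv.swap i (i+1)) : Pol →ₐ[ℤ] Pol)) := by
    apply MvPolynomial.algHom_ext
    intro j
    simp only [AlgHom.comp_apply, BS_X, rename_X]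
    rcases lt_trichotomy j i with h | rfl | h
    · rw [if_pos h, Equiv.swap_apply_of_ne_of_ne (by omega) (by omega),
        truncOp_X, if_pos (by omega)]
    · rw [if_neg (lt_irrefl _), if_pos rfl, Equiv.swap_apply_left, map_zero,
        truncOp_X, if_neg (by omega)]
    · rw [if_neg (by omega), if_neg (by omega), truncOp_X, truncOp_X]
      rcases eq_or_ne j (i+1) with rfl | hj
      · rw [Equiv.swap_apply_right]; simp
      · rw [Equiv.swap_apply_of_ne_of_ne (by omega) hj, if_neg (by omega), if_neg (by omega)]
  calc truncOp (i+1) (BS i f) = ((truncOp (i+1)).comp (BS i)) f := rfl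
    _ = truncOp (i+1) (rename (Equiv.swap i (i+1)) f) := by rw [this]; rfl

lemma Bop_congr {i : ℕ} {f g : Pol} (h : truncOp (i+1) f = truncOp (i+1) g) :
    Bop i f = Bop i g := by
  unfold Bop; rw [h]

lemma part1 (i : ℕ) (f : Pol) :
    Bop i (Dop i f) = Bop i (Tq i f) ∧ Bop i (Tq i f) = Bop i (ddiff i f) := by
  have h2 : Bop i (Tq i f) = Bop i (ddiff i f) := by
    apply Bop_congr
    rw [Tq, trunc_BS, swapVar_ddiff]
  refine ⟨?_, h2⟩
  rw [h2]
  apply Bop_congr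
  rw [Dop, trunc_trunc]

end

noncomputable section

lemma BSit_succ (k m : ℕ) (f : Pol) : BSit k (m+1) f = BS k (BSit k m f) :=
  Function.iterate_succ_apply' _ m f

lemma BSit_zero_eq (k m : ℕ) : BSit k m (0 : Pol) = 0 := by
  induction m with
  | zero => rfl
  | succ m ih => rw [BSit_succ, ih, map_zero]

lemma BSit_add (k m : ℕ) (f g : Pol) : BSit k m (f + g) = BSit k m f + BSit k m g := by
  induction m generalizing f g with
  | zero => rfl
  | succ m ih => rw [BSit_succ, BSit_succ, BSit_succ, ih, map_add]

lemma BSit_mul (k m : ℕ) (f g : Pol) : BSit k m (f * g) = BSit k m f * BSit k m g := by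
  induction m generalizing f g with
  | zero => rfl
  | succ m ih => rw [BSit_succ, BSit_succ, BSit_succ, ih, map_mul]

lemma BSit_one (k m : ℕ) : BSit k m (1 : Pol) = 1 := by
  induction m with
  | zero => rfl
  | succ m ih => rw [BSit_succ, ih, map_one]

lemma BSit_C (k m : ℕ) (a : ℤ) : BSit k m (C a : Pol) = C a := by
  induction m with
  | zero => rfl
  | succ m ih => rw [BSit_succ, ih]; simp [BS]

lemma BSit_pow (k m : ℕ) (f : Pol) (r : ℕ) : BSit k m (f ^ r) = BSit k m f ^ r := by
  induction r with
  | zero => simpa using BSit_one k m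
  | succ r ih => rw [pow_succ, BSit_mul, ih, pow_succ]

lemma BSit_X (k m j : ℕ) :
    BSit k m (X j : Pol) = if j < k then X j else if j < k + m then 0 else X (j - m) := by
  induction m with
  | zero =>
      simp only [BSit, Function.iterate_zero, id_eq, Nat.add_zero]
      by_cases h : j < k <;> simp [h]
  | succ m ih =>
      rw [BSit_succ, ih]
      by_cases h1 : j < k
      · rw [if_pos h1, if_pos h1, BS_X, if_pos h1]
      · rw [if_neg h1, if_neg h1]
        by_cases h2 : j < k + m
        · rw [if_pos h2, if_pos (by omega), map_zero]
        · rw [if_neg h2, BS_X, if_neg (by omega : ¬ (j - m < k))]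
          by_cases h3 : j < k + (m+1)
          · rw [if_pos h3, if_pos (by omega : j - m = k)]
          · rw [if_neg h3, if_neg (by omega : ¬ j - m = k)]
            exact congrArg X (by omega)

lemma BSit_prod (k m : ℕ) {α : Type*} (s : Finset α) (t : α → Pol) :
    BSit k m (∏ j ∈ s, t j) = ∏ j ∈ s, BSit k m (t j) := by
  classical
  induction s using Finset.induction_on with
  | empty => simpa using BSit_one k m
  | insert _ _ h ih => rw [Finset.prod_insert h, Finset.prod_insert h, BSit_mul, ih]

lemma Bop_zero (i : ℕ) : Bop i (0 : Pol) = 0 := by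
  unfold Bop
  rw [map_zero]
  simp [BSit_zero_eq]

lemma Bop_add (i : ℕ) (f g : Pol) : Bop i (f + g) = Bop i f + Bop i g := by
  unfold Bop
  rw [map_add, ← Finset.sum_add_distrib]
  exact Finset.sum_congr rfl fun k _ => by rw [BSit_add, mul_add]

lemma Bop_C_mul (i : ℕ) (a : ℤ) (f : Pol) : Bop i (C a * f) = C a * Bop i f := by
  unfold Bop
  have ht : truncOp (i+1) (C a * f) = C a * truncOp (i+1) f := by
    rw [map_mul]; congr 1; simp [truncOp]
  rw [ht, Finset.mul_sum]
  exact Finset.sum_congr rfl fun k _ => by rw [BSit_mul, BSit_C]; ring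

lemma Bop_neg (i : ℕ) (f : Pol) : Bop i (-f) = -Bop i f := by
  have := Bop_C_mul i (-1) f
  simpa using this

lemma ddiff_add (i : ℕ) (f g : Pol) : ddiff i (f + g) = ddiff i f + ddiff i g := by
  apply ddiff_eq
  have hf := ddiff_spec i f
  have hg := ddiff_spec i g
  have hs : swapVar i (f + g) = swapVar i f + swapVar i g := by simp [swapVar]
  rw [hs]; linear_combination hf + hg

lemma ddiff_C_mul (i : ℕ) (a : ℤ) (f : Pol) : ddiff i (C a * f) = C a * ddiff i f := by
  apply ddiff_eq
  have hf := ddiff_spec i f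
  have hs : swapVar i (C a * f) = C a * swapVar i f := by
    rw [swapVar, map_mul]; congr 1; simp [swapVar]
  rw [hs]; linear_combination (C a : Pol) * hf

lemma ddiff_zero (i : ℕ) : ddiff i (0 : Pol) = 0 := by
  apply ddiff_eq; simp [swapVar]

end

noncomputable section

lemma swapVar_monomial (i : ℕ) (d : ℕ →₀ ℕ) (c : ℤ) :
    swapVar i (monomial d c) = monomial (d.mapDomain (Equiv.swap i (i+1))) c :=
  rename_monomial _ _ _

lemma mapDomain_swap_apply (i : ℕ) (d : ℕ →₀ ℕ) (j : ℕ) :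
    (d.mapDomain (Equiv.swap i (i+1))) j = d (Equiv.swap i (i+1) j) := by
  rw [Finsupp.mapDomain_equiv_apply, Equiv.symm_swap]

lemma mapDomain_swap_eq {i : ℕ} {d : ℕ →₀ ℕ} (h : d i = d (i+1)) :
    d.mapDomain (Equiv.swap i (i+1)) = d := by
  ext j
  rw [mapDomain_swap_apply]
  rcases eq_or_ne j i with rfl | h1
  · rw [Equiv.swap_apply_left]; omega
  rcases eq_or_ne j (i+1) with rfl | h2
  · rw [Equiv.swap_apply_right]; omega
  · rw [Equiv.swap_apply_of_ne_of_ne h1 h2]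

/-- decomposition of a monomial at two slots -/
lemma monomial_decomp (i : ℕ) (d : ℕ →₀ ℕ) :
    (monomial d 1 : Pol) =
      monomial ((d.erase i).erase (i+1)) 1 * X i ^ d i * X (i+1) ^ d (i+1) := by
  have hd : d = ((d.erase i).erase (i+1)) + Finsupp.single i (d i) + Finsupp.single (i+1) (d (i+1)) := by
    ext j
    simp only [Finsupp.add_apply, Finsupp.erase_apply, Finsupp.single_apply]
    split_ifs <;> first | omega | (subst_vars; omega)
  rw [X_pow_eq_monomial, X_pow_eq_monomial, monomial_mul, monomial_mul, mul_one, mul_one, ← hd]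

lemma swapVar_monomial_erase (i : ℕ) (d : ℕ →₀ ℕ) :
    swapVar i (monomial ((d.erase i).erase (i+1)) 1 : Pol)
      = monomial ((d.erase i).erase (i+1)) 1 := by
  rw [swapVar_monomial, mapDomain_swap_eq (by
    rw [Finsupp.erase_ne (show i ≠ i+1 by omega), Finsupp.erase_same, Finsupp.erase_same])]

lemma swapVar_monomial_decomp (i : ℕ) (d : ℕ →₀ ℕ) :
    swapVar i (monomial d 1 : Pol) =
      monomial ((d.erase i).erase (i+1)) 1 * X i ^ d (i+1) * X (i+1) ^ d i := by
  rw [swapVar, monomial_decomp i d, map_mul, map_mul, map_pow, map_pow, rename_X, rename_X,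
    Equiv.swap_apply_left, Equiv.swap_apply_right, ← swapVar, swapVar_monomial_erase]
  ring

lemma ddiff_monomial_same {i : ℕ} {d : ℕ →₀ ℕ} (h : d i = d (i+1)) :
    ddiff i (monomial d 1 : Pol) = 0 := by
  apply ddiff_eq
  rw [swapVar_monomial, mapDomain_swap_eq h]
  ring

lemma ddiff_monomial_lt {i : ℕ} {d : ℕ →₀ ℕ} (h : d (i+1) < d i) :
    ddiff i (monomial d 1 : Pol) =
      monomial ((d.erase i).erase (i+1)) 1 * (X i ^ d (i+1) * X (i+1) ^ d (i+1)) *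
        ∑ t ∈ Finset.range (d i - d (i+1)), X i ^ t * X (i+1) ^ (d i - d (i+1) - 1 - t) := by
  apply ddiff_eq
  rw [swapVar_monomial_decomp i d, monomial_decomp i d]
  have hg := geom_sum₂_mul (X i : Pol) (X (i+1)) (d i - d (i+1))
  have h1 : (X i : Pol) ^ d (i+1) * X i ^ (d i - d (i+1)) = X i ^ d i := by
    rw [← pow_add]; congr 1; omega
  have h2 : (X (i+1) : Pol) ^ d (i+1) * X (i+1) ^ (d i - d (i+1)) = X (i+1) ^ d i := by
    rw [← pow_add]; congr 1; omega
  set m' : Pol := monomial ((d.erase i).erase (i+1)) 1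
  linear_combination (m' * X i ^ d (i+1) * X (i+1) ^ d (i+1)) * hg
    + (m' * X (i+1) ^ d (i+1)) * h1 - (m' * X i ^ d (i+1)) * h2

lemma ddiff_monomial_gt {i : ℕ} {d : ℕ →₀ ℕ} (h : d i < d (i+1)) :
    ddiff i (monomial d 1 : Pol) =
      -(monomial ((d.erase i).erase (i+1)) 1 * (X i ^ d i * X (i+1) ^ d i) *
        ∑ t ∈ Finset.range (d (i+1) - d i), X i ^ t * X (i+1) ^ (d (i+1) - d i - 1 - t)) := by
  apply ddiff_eq
  rw [swapVar_monomial_decomp i d, monomial_decomp i d]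
  have hg := geom_sum₂_mul (X i : Pol) (X (i+1)) (d (i+1) - d i)
  have h1 : (X i : Pol) ^ d i * X i ^ (d (i+1) - d i) = X i ^ d (i+1) := by
    rw [← pow_add]; congr 1; omega
  have h2 : (X (i+1) : Pol) ^ d i * X (i+1) ^ (d (i+1) - d i) = X (i+1) ^ d (i+1) := by
    rw [← pow_add]; congr 1; omega
  set m' : Pol := monomial ((d.erase i).erase (i+1)) 1
  linear_combination (-(m' * X i ^ d i * X (i+1) ^ d i)) * hg
    - (m' * X (i+1) ^ d i) * h1 + (m' * X i ^ d i) * h2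

end

noncomputable section

lemma trunc_monomial (N : ℕ) (e : ℕ →₀ ℕ) :
    truncOp N (monomial e 1 : Pol) =
      if ∀ j ∈ e.support, j < N then monomial e 1 else 0 := by
  rw [← prod_X_pow_eq_monomial, map_prod]
  by_cases h : ∀ j ∈ e.support, j < N
  · rw [if_pos h]
    exact Finset.prod_congr rfl fun j hj => by rw [map_pow, truncOp_X, if_pos (h j hj)]
  · rw [if_neg h]
    push_neg at h
    obtain ⟨j0, hj0, hjN⟩ := h
    apply Finset.prod_eq_zero hj0
    rw [map_pow, truncOp_X, if_neg (by omega : ¬ j0 < N)]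
    exact zero_pow (Finsupp.mem_support_iff.1 hj0)

lemma monomial_mul_Xpow (e : ℕ →₀ ℕ) (i r : ℕ) :
    (monomial e 1 : Pol) * X i ^ r = monomial (e + Finsupp.single i r) 1 := by
  rw [X_pow_eq_monomial, monomial_mul, mul_one]

lemma trunc_geom (i a : ℕ) (ha : 0 < a) :
    truncOp (i+1) (∑ t ∈ Finset.range a, X i ^ t * X (i+1) ^ (a - 1 - t) : Pol)
      = X i ^ (a-1) := by
  rw [map_sum]
  have hc : ∀ t ∈ Finset.range a,
      truncOp (i+1) (X i ^ t * X (i+1) ^ (a-1-t) : Pol)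
        = if t = a - 1 then X i ^ (a-1) else 0 := by
    intro t ht
    rw [Finset.mem_range] at ht
    rw [map_mul, map_pow, map_pow, truncOp_X, truncOp_X, if_pos (by omega), if_neg (by omega)]
    by_cases h : t = a - 1
    · rw [if_pos h, show a - 1 - t = 0 by omega, pow_zero, mul_one, h]
    · rw [if_neg h, zero_pow (by omega), mul_zero]
  rw [Finset.sum_congr rfl hc, Finset.sum_ite_eq' (Finset.range a) (a-1) fun _ => (X i ^ (a-1) : Pol),
    if_pos (Finset.mem_range.2 (by omega))]

lemma erase_erase_support {i : ℕ} {d : ℕ →₀ ℕ} {j : ℕ}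
    (hj : j ∈ ((d.erase i).erase (i+1)).support) : d j ≠ 0 ∧ j ≠ i ∧ j ≠ i + 1 := by
  rw [Finsupp.mem_support_iff] at hj
  rcases eq_or_ne j (i+1) with rfl | h2
  · rw [Finsupp.erase_same] at hj; exact absurd rfl hj
  rcases eq_or_ne j i with rfl | h1
  · rw [Finsupp.erase_ne h2, Finsupp.erase_same] at hj; exact absurd rfl hj
  · rw [Finsupp.erase_ne h2, Finsupp.erase_ne h1] at hj; exact ⟨hj, h1, h2⟩

lemma Dop_far {i : ℕ} {d : ℕ →₀ ℕ} (h : ∃ j, i+1 < j ∧ d j ≠ 0) :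
    Dop i (monomial d 1 : Pol) = 0 := by
  obtain ⟨j0, hj0, hd0⟩ := h
  have hm : truncOp (i+1) (monomial ((d.erase i).erase (i+1)) 1 : Pol) = 0 := by
    rw [trunc_monomial, if_neg]
    push_neg
    refine ⟨j0, ?_, by omega⟩
    rw [Finsupp.mem_support_iff, Finsupp.erase_ne (by omega : j0 ≠ i+1),
      Finsupp.erase_ne (by omega : j0 ≠ i)]
    exact hd0
  rw [Dop]
  rcases lt_trichotomy (d i) (d (i+1)) with hlt | heq | hgt
  · rw [ddiff_monomial_gt hlt, map_neg, map_mul, map_mul, hm, zero_mul, zero_mul, neg_zero]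
  · rw [ddiff_monomial_same heq, map_zero]
  · rw [ddiff_monomial_lt hgt, map_mul, map_mul, hm, zero_mul, zero_mul]

lemma Dop_mid {i : ℕ} {d : ℕ →₀ ℕ} (ha : 0 < d i) (hb : 0 < d (i+1)) :
    Dop i (monomial d 1 : Pol) = 0 := by
  have hX : ∀ r : ℕ, 0 < r → truncOp (i+1) (X (i+1) ^ r : Pol) = 0 := by
    intro r hr
    rw [map_pow, truncOp_X, if_neg (by omega), zero_pow (by omega)]
  rw [Dop]
  rcases lt_trichotomy (d i) (d (i+1)) with hlt | heq | hgt
  · rw [ddiff_monomial_gt hlt, map_neg, map_mul, map_mul, map_mul, hX _ ha,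
      mul_zero, mul_zero, zero_mul, neg_zero]
  · rw [ddiff_monomial_same heq, map_zero]
  · rw [ddiff_monomial_lt hgt, map_mul, map_mul, map_mul, hX _ hb,
      mul_zero, mul_zero, zero_mul]

lemma Dop_top {i : ℕ} {d : ℕ →₀ ℕ} (hhigh : ∀ j, i < j → d j = 0) (hpos : 0 < d i) :
    Dop i (monomial d 1 : Pol) = monomial (d.update i (d i - 1)) 1 := by
  have hb : d (i+1) = 0 := hhigh _ (by omega)
  have hlt : d (i+1) < d i := by omega
  have hm : truncOp (i+1) (monomial ((d.erase i).erase (i+1)) 1 : Pol)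
      = monomial ((d.erase i).erase (i+1)) 1 := by
    rw [trunc_monomial, if_pos]
    intro j hj
    obtain ⟨h1, h2, _⟩ := erase_erase_support hj
    by_contra hlt2
    exact h1 (hhigh j (by omega))
  rw [Dop, ddiff_monomial_lt hlt, hb]
  simp only [pow_zero, mul_one, one_mul, Nat.sub_zero]
  rw [map_mul, hm, trunc_geom i (d i) hpos, monomial_mul_Xpow]
  congr 1
  rw [Finsupp.update_eq_erase_add_single]
  congr 2
  ext j
  simp only [Finsupp.erase_apply]
  split_ifs <;> first | rfl | omega | (subst_vars; omega) | (subst_vars; simp_all)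

lemma Dop_sub {i : ℕ} {d : ℕ →₀ ℕ} (hhigh : ∀ j, i+1 < j → d j = 0) (hzero : d i = 0)
    (hpos : 0 < d (i+1)) :
    Dop i (monomial d 1 : Pol) = -(monomial ((d.erase (i+1)).update i (d (i+1) - 1)) 1) := by
  have hgt : d i < d (i+1) := by omega
  have hm : truncOp (i+1) (monomial ((d.erase i).erase (i+1)) 1 : Pol)
      = monomial ((d.erase i).erase (i+1)) 1 := by
    rw [trunc_monomial, if_pos]
    intro j hj
    obtain ⟨h1, h2, h3⟩ := erase_erase_support hj
    by_contra hlt2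
    exact h1 (hhigh j (by omega))
  rw [Dop, ddiff_monomial_gt hgt, hzero]
  simp only [pow_zero, mul_one, one_mul, Nat.sub_zero, map_neg]
  rw [map_mul, hm, trunc_geom i (d (i+1)) hpos, monomial_mul_Xpow]
  congr 2
  rw [Finsupp.update_eq_erase_add_single]
  congr 2
  ext j
  simp only [Finsupp.erase_apply]
  split_ifs <;> first | rfl | omega | (subst_vars; omega) | (subst_vars; simp_all)
end

noncomputable section

lemma monomial_eq_prod_range (e : ℕ →₀ ℕ) (N : ℕ) (h : ∀ j ∈ e.support, j < N) :
    (monomial e 1 : Pol) = ∏ j ∈ Finset.range N, X j ^ e j := by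
  rw [← prod_X_pow_eq_monomial]
  apply Finset.prod_subset
  · exact fun j hj => Finset.mem_range.2 (h j hj)
  · intro j _ hj
    rw [Finsupp.notMem_support_iff.1 hj, pow_zero]

lemma Bop_mono (i : ℕ) (e : ℕ →₀ ℕ) (he : ∀ j, i < j → e j = 0) :
    Bop i (monomial e 1) =
      ∑ k ∈ Finset.range (i+1),
        (if ∀ j, k ≤ j → j < i → e j = 0
          then X k ^ (e i + 1) * ∏ j ∈ Finset.range k, X j ^ e j else 0) := by
  have hsupp : ∀ j ∈ e.support, j < i + 1 := by
    intro j hj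
    by_contra hc
    exact Finsupp.mem_support_iff.1 hj (he j (by omega))
  unfold Bop
  rw [trunc_monomial, if_pos hsupp]
  apply Finset.sum_congr rfl
  intro k hk
  rw [Finset.mem_range] at hk
  have hk' : k ≤ i := by omega
  rw [monomial_eq_prod_range e (i+1) hsupp, BSit_prod]
  have hfac : ∀ j ∈ Finset.range (i+1),
      BSit k (i-k) ((X j : Pol) ^ e j)
        = (if j < k then X j ^ e j else if j < i then (0:Pol) ^ e j else X k ^ e j) := by
    intro j hj
    rw [Finset.mem_range] at hj
    rw [BSit_pow, BSit_X]
    by_cases h1 : j < k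
    · rw [if_pos h1, if_pos h1]
    · rw [if_neg h1, if_neg h1]
      by_cases h2 : j < i
      · rw [if_pos (by omega : j < k + (i-k)), if_pos h2]
      · rw [if_neg (by omega : ¬ j < k + (i-k)), if_neg h2,
          show j - (i - k) = k by omega]
  rw [Finset.prod_congr rfl hfac]
  rw [Finset.prod_range_succ, if_neg (by omega : ¬ i < k), if_neg (lt_irrefl i)]
  rw [show Finset.range i = Finset.Ico 0 i from Finset.range_eq_Ico i,
    ← Finset.prod_Ico_consecutive _ (Nat.zero_le k) (by omega : k ≤ i),
    ← Finset.range_eq_Ico]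
  have hsmall : ∀ j ∈ Finset.range k,
      (if j < k then (X j : Pol) ^ e j else if j < i then (0:Pol) ^ e j else X k ^ e j)
        = X j ^ e j := by
    intro j hj
    rw [Finset.mem_range] at hj
    rw [if_pos hj]
  have hmidf : ∀ j ∈ Finset.Ico k i,
      (if j < k then (X j : Pol) ^ e j else if j < i then (0:Pol) ^ e j else X k ^ e j)
        = (0:Pol) ^ e j := by
    intro j hj
    rw [Finset.mem_Ico] at hj
    rw [if_neg (by omega), if_pos (by omega)]
  rw [Finset.prod_congr rfl hsmall, Finset.prod_congr rfl hmidf]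
  by_cases hall : ∀ j, k ≤ j → j < i → e j = 0
  · rw [if_pos hall]
    have : ∏ j ∈ Finset.Ico k i, (0:Pol) ^ e j = 1 := by
      apply Finset.prod_eq_one
      intro j hj
      rw [Finset.mem_Ico] at hj
      rw [hall j hj.1 hj.2, pow_zero]
    rw [this, mul_one, pow_succ]
    ring
  · rw [if_neg hall]
    push_neg at hall
    obtain ⟨j0, hj1, hj2, hj3⟩ := hall
    have : ∏ j ∈ Finset.Ico k i, (0:Pol) ^ e j = 0 := by
      apply Finset.prod_eq_zero (Finset.mem_Ico.2 ⟨hj1, hj2⟩)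
      exact zero_pow hj3
    rw [this, mul_zero, zero_mul, mul_zero]

end

noncomputable section

lemma updApply (f : ℕ →₀ ℕ) (a b j : ℕ) : (f.update a b) j = if j = a then b else f j := by
  rw [Finsupp.update_eq_erase_add_single, Finsupp.add_apply, Finsupp.erase_apply,
    Finsupp.single_apply]
  split_ifs <;> first | omega | (subst_vars; omega) | (subst_vars; simp_all)

/-- the spill-over sum -/
def Sd (d : ℕ →₀ ℕ) (n : ℕ) : Pol :=
  ∑ k ∈ Finset.range n,
    (if ∀ j, k ≤ j → j < n → d j = 0
      then X k ^ (d n) * ∏ j ∈ Finset.range k, X j ^ d j else 0)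

lemma lemA {n : ℕ} {d : ℕ →₀ ℕ} (hn : ∀ j, n < j → d j = 0) (hpos : 0 < d n) :
    Bop n (Dop n (monomial d 1)) = monomial d 1 + Sd d n := by
  rw [Dop_top hn hpos]
  set e := d.update n (d n - 1) with hedef
  have heap : ∀ j, e j = if j = n then d n - 1 else d j := fun j => updApply d n (d n - 1) j
  have he : ∀ j, n < j → e j = 0 := by
    intro j hj
    rw [heap, if_neg (by omega)]
    exact hn j hj
  rw [Bop_mono n e he, Finset.sum_range_succ]
  have hlast : (if ∀ j, n ≤ j → j < n → e j = 0
      then X n ^ (e n + 1) * ∏ j ∈ Finset.range n, X j ^ e j else (0:Pol)) = monomial d 1 := by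
    rw [if_pos (fun j h1 h2 => absurd (lt_of_le_of_lt h1 h2) (lt_irrefl n))]
    have hen : e n + 1 = d n := by rw [heap, if_pos rfl]; omega
    have hej : ∀ j ∈ Finset.range n, (X j : Pol) ^ e j = X j ^ d j := by
      intro j hj
      rw [Finset.mem_range] at hj
      rw [heap, if_neg (by omega)]
    rw [hen, Finset.prod_congr rfl hej,
      monomial_eq_prod_range d (n+1) (fun j hj => by
        by_contra hc
        exact Finsupp.mem_support_iff.1 hj (hn j (by omega))),
      Finset.prod_range_succ]
    ring
  rw [hlast, add_comm]
  congr 1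
  rw [Sd]
  apply Finset.sum_congr rfl
  intro k hk
  rw [Finset.mem_range] at hk
  have hcond : (∀ j, k ≤ j → j < n → e j = 0) ↔ (∀ j, k ≤ j → j < n → d j = 0) := by
    constructor <;> intro h j h1 h2
    · have := h j h1 h2; rwa [heap, if_neg (by omega)] at this
    · rw [heap, if_neg (by omega)]; exact h j h1 h2
  have hen : e n + 1 = d n := by rw [heap, if_pos rfl]; omega
  by_cases h : ∀ j, k ≤ j → j < n → d j = 0
  · rw [if_pos (hcond.2 h), if_pos h, hen]
    congr 1
    apply Finset.prod_congr rfl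
    intro j hj
    rw [Finset.mem_range] at hj
    rw [heap, if_neg (by omega)]
  · rw [if_neg (fun hc => h (hcond.1 hc)), if_neg h]

lemma lemB {i : ℕ} {d : ℕ →₀ ℕ} (hn : ∀ j, i+1 < j → d j = 0) (hpos : 0 < d (i+1)) :
    Bop i (Dop i (monomial d 1)) = -(Sd d (i+1)) := by
  by_cases hz : d i = 0
  · rw [Dop_sub hn hz hpos, Bop_neg]
    congr 1
    set e := (d.erase (i+1)).update i (d (i+1) - 1) with hedef
    have heap : ∀ j, e j = if j = i then d (i+1) - 1 else if j = i+1 then 0 else d j := by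
      intro j
      rw [updApply, Finsupp.erase_apply]
    have he : ∀ j, i < j → e j = 0 := by
      intro j hj
      rw [heap, if_neg (by omega)]
      split_ifs with h
      · rfl
      · exact hn j (by omega)
    rw [Bop_mono i e he, Sd]
    apply Finset.sum_congr rfl
    intro k hk
    rw [Finset.mem_range] at hk
    have hcond : (∀ j, k ≤ j → j < i → e j = 0) ↔ (∀ j, k ≤ j → j < i+1 → d j = 0) := by
      constructor <;> intro h j h1 h2
      · rcases eq_or_ne j i with rfl | hne
        · exact hz
        · have := h j h1 (by omega)
          rwa [heap, if_neg (by omega), if_neg (by omega)] at this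
      · rw [heap, if_neg (by omega), if_neg (by omega)]
        exact h j h1 (by omega)
    have hei : e i + 1 = d (i+1) := by rw [heap, if_pos rfl]; omega
    by_cases h : ∀ j, k ≤ j → j < i+1 → d j = 0
    · rw [if_pos (hcond.2 h), if_pos h, hei]
      congr 1
      apply Finset.prod_congr rfl
      intro j hj
      rw [Finset.mem_range] at hj
      rw [heap, if_neg (by omega), if_neg (by omega)]
    · rw [if_neg (fun hc => h (hcond.1 hc)), if_neg h]
  · rw [Dop_mid (by omega) hpos, Bop_zero]
    have : Sd d (i+1) = 0 := by
      rw [Sd]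
      apply Finset.sum_eq_zero
      intro k hk
      rw [Finset.mem_range] at hk
      rw [if_neg]
      intro hc
      exact hz (hc i (by omega) (by omega))
    rw [this, neg_zero]

lemma vanish_high {i : ℕ} {d : ℕ →₀ ℕ} (h : ∀ j, i ≤ j → d j = 0) :
    Bop i (Dop i (monomial d 1)) = 0 := by
  rw [Dop, ddiff_monomial_same (by rw [h i le_rfl, h (i+1) (by omega)]), map_zero, Bop_zero]

lemma vanish_far {i : ℕ} {d : ℕ →₀ ℕ} (h : ∃ j, i+1 < j ∧ d j ≠ 0) :
    Bop i (Dop i (monomial d 1)) = 0 := by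
  rw [Dop_far h, Bop_zero]

lemma sum_monomial {d : ℕ →₀ ℕ} (hd : d ≠ 0) {N : ℕ} (hN : ∀ j, N ≤ j → d j = 0) :
    ∑ i ∈ Finset.range N, Bop i (Dop i (monomial d 1)) = monomial d 1 := by
  have hsupp : d.support.Nonempty := Finsupp.support_nonempty_iff.2 hd
  set n := d.support.max' hsupp with hndef
  have hdn : 0 < d n := by
    have h2 := d.support.max'_mem hsupp
    rw [Finsupp.mem_support_iff] at h2
    exact Nat.pos_of_ne_zero h2
  have hhigh : ∀ j, n < j → d j = 0 := by
    intro j hj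
    by_contra hc
    exact absurd (d.support.le_max' j (Finsupp.mem_support_iff.2 hc)) (by omega)
  have hnN : n < N := by
    by_contra hc
    exact absurd (hN n (by omega)) (by omega)
  rcases Nat.eq_zero_or_pos n with hn0 | hn1
  · have hhigh' : ∀ j, 0 < j → d j = 0 := fun j hj => hhigh j (by omega)
    have hd0 : 0 < d 0 := hn0 ▸ hdn
    rw [Finset.sum_eq_single_of_mem 0 (Finset.mem_range.2 (by omega))]
    · rw [lemA hhigh' hd0, Sd]
      simp
    · intro i _ hi
      exact vanish_high (fun j hj => hhigh' j (by omega))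
  · have hsub : ({n-1, n} : Finset ℕ) ⊆ Finset.range N := by
      intro x hx
      rw [Finset.mem_insert, Finset.mem_singleton] at hx
      rw [Finset.mem_range]
      omega
    rw [← Finset.sum_subset hsub]
    · rw [Finset.sum_pair (by omega : n - 1 ≠ n)]
      have hB := lemB (i := n-1) (d := d) (by intro j hj; exact hhigh j (by omega)) (by
        rw [show n - 1 + 1 = n by omega]; exact hdn)
      rw [show n - 1 + 1 = n by omega] at hB
      rw [hB, lemA hhigh hdn]
      ring
    · intro i hi hnot
      rw [Finset.mem_insert, Finset.mem_singleton] at hnot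
      push_neg at hnot
      rcases lt_or_gt_of_ne hnot.2 with hlt | hgt
      · exact vanish_far ⟨n, by omega, by omega⟩
      · exact vanish_high (fun j hj => hhigh j (by omega))

end

noncomputable section

lemma G_sum (i : ℕ) {α : Type*} (s : Finset α) (h : α → Pol) :
    Bop i (ddiff i (∑ x ∈ s, h x)) = ∑ x ∈ s, Bop i (ddiff i (h x)) := by
  classical
  induction s using Finset.induction_on with
  | empty => simp [ddiff_zero, Bop_zero]
  | insert _ _ hx ih => rw [Finset.sum_insert hx, ddiff_add, Bop_add, ih, Finset.sum_insert hx]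

lemma BD_eq_Bdd (i : ℕ) (f : Pol) : Bop i (Dop i f) = Bop i (ddiff i f) :=
  (part1 i f).1.trans (part1 i f).2

lemma swap_fix {i : ℕ} {f : Pol} (h : ∀ d ∈ f.support, d i = 0 ∧ d (i+1) = 0) :
    swapVar i f = f := by
  conv_lhs => rw [f.as_sum]
  rw [swapVar, map_sum]
  conv_rhs => rw [f.as_sum]
  apply Finset.sum_congr rfl
  intro d hd
  rw [← swapVar, swapVar_monomial, mapDomain_swap_eq (by rw [(h d hd).1, (h d hd).2])]

set_option maxHeartbeats 1000000 in
lemma part2 (f : Pol) (h0 : constantCoeff f = 0) :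
    {i : ℕ | Bop i (ddiff i f) ≠ 0}.Finite ∧ ∑ᶠ i : ℕ, Bop i (ddiff i f) = f := by
  set N := f.vars.sup id + 1 with hNdef
  have hvar : ∀ d ∈ f.support, ∀ j, N ≤ j → d j = 0 := by
    intro d hd j hj
    by_contra hc
    have hjv : j ∈ f.vars := (mem_vars j).2 ⟨d, hd, Finsupp.mem_support_iff.2 hc⟩
    have := Finset.le_sup (f := id) hjv
    simp only [id_eq] at this
    omega
  have hvanish : ∀ i, N ≤ i → Bop i (ddiff i f) = 0 := by
    intro i hi
    have hfix : swapVar i f = f :=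
      swap_fix (fun d hd => ⟨hvar d hd i hi, hvar d hd (i+1) (by omega)⟩)
    have : ddiff i f = 0 := ddiff_eq (by rw [hfix, sub_self, mul_zero])
    rw [this, Bop_zero]
  have key : ∑ i ∈ Finset.range N, Bop i (ddiff i f) = f := by
    have hrew : ∀ i, Bop i (ddiff i f)
        = ∑ d ∈ f.support, C (f.coeff d) * Bop i (ddiff i (monomial d 1)) := by
      intro i
      conv_lhs => rw [f.as_sum]
      rw [G_sum]
      apply Finset.sum_congr rfl
      intro d _
      rw [show (monomial d (f.coeff d) : Pol) = C (f.coeff d) * monomial d 1 by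
        rw [C_mul_monomial, mul_one], ddiff_C_mul, Bop_C_mul]
    calc ∑ i ∈ Finset.range N, Bop i (ddiff i f)
        = ∑ i ∈ Finset.range N, ∑ d ∈ f.support,
            C (f.coeff d) * Bop i (ddiff i (monomial d 1)) :=
          Finset.sum_congr rfl fun i _ => hrew i
      _ = ∑ d ∈ f.support, ∑ i ∈ Finset.range N,
            C (f.coeff d) * Bop i (ddiff i (monomial d 1)) := Finset.sum_comm
      _ = ∑ d ∈ f.support, C (f.coeff d) * monomial d 1 := by
          apply Finset.sum_congr rfl
          intro d hd
          rw [← Finset.mul_sum]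
          congr 1
          have hd0 : d ≠ 0 := by
            intro hc
            apply MvPolynomial.mem_support_iff.1 hd
            rw [hc, ← constantCoeff_eq]
            exact h0
          calc ∑ i ∈ Finset.range N, Bop i (ddiff i (monomial d 1))
              = ∑ i ∈ Finset.range N, Bop i (Dop i (monomial d 1)) :=
                Finset.sum_congr rfl fun i _ => (BD_eq_Bdd i _).symm
            _ = monomial d 1 := sum_monomial hd0 (hvar d hd)
      _ = f := by
          conv_rhs => rw [f.as_sum]
          exact Finset.sum_congr rfl fun d _ => by rw [C_mul_monomial, mul_one]
  have hsub : (Function.support fun i => Bop i (ddiff i f)) ⊆ ↑(Finset.range N) := by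
    intro i hi
    rw [Function.mem_support] at hi
    by_contra hc
    exact hi (hvanish i (by simp only [Finset.coe_range, Set.mem_Iio] at hc; omega))
  constructor
  · exact Set.Finite.subset (Finset.range N).finite_toSet hsub
  · rw [finsum_eq_sum_of_support_subset _ hsub]
    exact key

end

/-- `B_i∘D_i = B_i∘T_i = B_i∘∂_i` on `Pol`; consequently the slide
creators are simultaneously creation operators for the `∂_i` and the `T_i`. -/
theorem stmt_14 :
    (∀ (i : ℕ) (f : Pol),
      Bop i (Dop i f) = Bop i (Tq i f) ∧ Bop i (Tq i f) = Bop i (ddiff i f)) ∧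
    ∀ f : Pol, constantCoeff f = 0 →
      ({i : ℕ | Bop i (ddiff i f) ≠ 0}.Finite ∧ ∑ᶠ i : ℕ, Bop i (ddiff i f) = f) ∧
      ({i : ℕ | Bop i (Tq i f) ≠ 0}.Finite ∧ ∑ᶠ i : ℕ, Bop i (Tq i f) = f) := by
  refine ⟨fun i f => part1 i f, ?_⟩
  intro f h0
  obtain ⟨hfin, hsum⟩ := part2 f h0
  refine ⟨⟨hfin, hsum⟩, ?_, ?_⟩
  · have hset : {i : ℕ | Bop i (Tq i f) ≠ 0} = {i : ℕ | Bop i (ddiff i f) ≠ 0} :=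
      Set.ext fun i => by simp only [Set.mem_setOf_eq, (part1 i f).2]
    rw [hset]
    exact hfin
  · rw [finsum_congr fun i => (part1 i f).2]
    exact hsum
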